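/- For every 1 ≤ a with 2a ≤ m and any choices F_{2a-1} ∈ {L_{2a-1}^+, L_{2a-1}^-, M_{2a-1}^+, M_{2a-1}^-} and F_{2a} ∈ {L_{2a}^+, L_{2a}^-, M_{2a}^+, M_{2a}^-}, one has F_{2a-1}·F_{2a}·e_{2a-1}^⊥·e_{2a}^⊥ = (-1)^{|F_{2a-1}|+|F_{2a}|+1}·i·F_{2a-1}·F_{2a}. -/

import Mathlib

noncomputable section

/-- The bilinear map `B((a,b),(c,d)) = ∑ⱼ aⱼ dⱼ` on `ℂ^m × ℂ^m`. -/
def splitBilin (m : ℕ) :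
    ((Fin m → ℂ) × (Fin m → ℂ)) →ₗ[ℂ] ((Fin m → ℂ) × (Fin m → ℂ)) →ₗ[ℂ] ℂ :=
  LinearMap.mk₂ ℂ (fun v w => ∑ j, v.1 j * w.2 j)
    (fun v v' w => by simp [add_mul, Finset.sum_add_distrib])
    (fun c v w => by
      simp only [LinearMap.smul_apply, Prod.smul_fst, Pi.smul_apply, smul_eq_mul,
        Finset.mul_sum]
      exact Finset.sum_congr rfl fun i _ => by ring)
    (fun v w w' => by simp [mul_add, Finset.sum_add_distrib])
    (fun c v w => by
      simp only [Prod.smul_snd, Pi.smul_apply, smul_eq_mul, Finset.mul_sum]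
      exact Finset.sum_congr rfl fun i _ => by ring)

/-- The quadratic form `Q(a, b) = ∑ⱼ aⱼ bⱼ` on `ℂ^m × ℂ^m` (the span of the
`f_j^+` and the `f_j^-`). -/
def splitQ (m : ℕ) : QuadraticForm ℂ ((Fin m → ℂ) × (Fin m → ℂ)) :=
  LinearMap.BilinMap.toQuadraticMap (splitBilin m)

/-- The forward basis element `e_j^+` (1-based index `j`). -/
def eP (m : ℕ) (j : ℕ) : CliffordAlgebra (splitQ m) :=
  CliffordAlgebra.ι (splitQ m) ((fun i => if (i : ℕ) + 1 = j then 1 else 0), 0)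

/-- The backward basis element `e_j^-` (1-based index `j`). -/
def eM (m : ℕ) (j : ℕ) : CliffordAlgebra (splitQ m) :=
  CliffordAlgebra.ι (splitQ m) (0, (fun i => if (i : ℕ) + 1 = j then 1 else 0))

/-- `e_j = e_j^+ + e_j^-`. -/
def ee (m : ℕ) (j : ℕ) : CliffordAlgebra (splitQ m) := eP m j + eM m j

/-- `e_j^⊥ = e_j^+ - e_j^-`. -/
def eperp (m : ℕ) (j : ℕ) : CliffordAlgebra (splitQ m) := eP m j - eM m j

/-- The constant `i` for odd (1-based) indices and `1` for even indices. -/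
def oddI (s : ℕ) : ℂ := if s % 2 = 1 then Complex.I else 1

/-- `L_s^+`, i.e. `e_s^+ e_s^- + i e_s^+` for odd `s` and `e_s^+ e_s^- + e_s^+` for even `s`. -/
def idemLp (m : ℕ) (s : ℕ) : CliffordAlgebra (splitQ m) := eP m s * eM m s + oddI s • eP m s

/-- `L_s^-`. -/
def idemLm (m : ℕ) (s : ℕ) : CliffordAlgebra (splitQ m) := eP m s * eM m s - oddI s • eP m s

/-- `M_s^+`, i.e. `e_s^- e_s^+ + i e_s^-` for odd `s` and `e_s^- e_s^+ + e_s^-` for even `s`. -/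
def idemMp (m : ℕ) (s : ℕ) : CliffordAlgebra (splitQ m) := eM m s * eP m s + oddI s • eM m s

/-- `M_s^-`. -/
def idemMm (m : ℕ) (s : ℕ) : CliffordAlgebra (splitQ m) := eM m s * eP m s - oddI s • eM m s

/-- A generic choice `F_s ∈ {L_s^+, L_s^-, M_s^+, M_s^-}`, encoded by
`‖F_s‖ : Bool` (`true` for the `M`'s) and `|F_s| : Bool`
(`true` for `L_s^-` and `M_s^+`). -/
def idemF (m : ℕ) (s : ℕ) : Bool → Bool → CliffordAlgebra (splitQ m)
  | false, false => idemLp m s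
  | false, true => idemLm m s
  | true, false => idemMm m s
  | true, true => idemMp m s

/-- Numerical value of `|F_s|` or `‖F_s‖`. -/
def bval (b : Bool) : ℕ := if b then 1 else 0

/-- The four-vector `V_{a,b} = -e_a^⊥ e_a e_b^⊥ e_b`. -/
def VV (m : ℕ) (a b : ℕ) : CliffordAlgebra (splitQ m) :=
  -(eperp m a * ee m a * eperp m b * ee m b)

/-- The ordered product `F = F_1 F_2 ⋯ F_m`, the factor `F_s` being encoded by
`(nrm s, sg s) = (‖F_s‖, |F_s|)`. -/
def prodF (m : ℕ) (nrm sg : ℕ → Bool) : CliffordAlgebra (splitQ m) :=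
  ((List.range m).map fun s => idemF m (s + 1) (nrm (s + 1)) (sg (s + 1))).prod

section Abstract
set_option linter.unusedSectionVars false
variable {A : Type*} [Ring A] [Algebra ℂ A]

lemma Lc (p q : A) (c : ℂ) (hp : p*p = 0) (hq : q*q = 0) (hqp : q*p = 1 - p*q) :
    (p*q + c•p)*(p - q) = p - c•(p*q) := by
  have e1 : (p*q + c•p)*(p - q) = (p*q*p - p*q*q) + c•(p*p - p*q) := by
    rw [add_mul, mul_sub, smul_mul_assoc, mul_sub]
  rw [e1, mul_assoc p q p, hqp, mul_sub, mul_one, ← mul_assoc, hp, zero_mul, sub_zero,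
    mul_assoc p q q, hq, mul_zero, sub_zero]
  simp [sub_eq_add_neg]

lemma Mc (p q : A) (c : ℂ) (hp : p*p = 0) (hq : q*q = 0) (hpq : p*q = 1 - q*p) :
    (q*p + c•q)*(p - q) = -q + c•(q*p) := by
  have e1 : (q*p + c•q)*(p - q) = (q*p*p - q*p*q) + c•(q*p - q*q) := by
    rw [add_mul, mul_sub, smul_mul_assoc, mul_sub]
  rw [e1, mul_assoc q p p, hp, mul_zero, zero_sub, mul_assoc q p q, hpq, mul_sub, mul_one,
    ← mul_assoc, hq, zero_mul, sub_zero]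
  simp

lemma comm2 (a b x : A) (ha : a*x = -(x*a)) (hb : b*x = -(x*b)) : (a*b)*x = x*(a*b) := by
  rw [mul_assoc, hb, mul_neg, ← mul_assoc, ha, neg_mul, neg_neg, mul_assoc]

lemma swapLem (w y p q : A) (c : ℂ) (hwp : w*p = p*w) (hwq : w*q = q*w)
    (hyp : y*p = -(p*y)) (hyq : y*q = -(q*y)) :
    (w + c•y)*(p - q) = (p - q)*(w - c•y) := by
  have e1 : (w + c•y)*(p - q) = (w*p - w*q) + c•(y*p - y*q) := by
    rw [add_mul, mul_sub, smul_mul_assoc, mul_sub]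
  have e2 : (p - q)*(w - c•y) = (p*w - q*w) - c•(p*y - q*y) := by
    rw [sub_mul, mul_sub, mul_sub, mul_smul_comm, mul_smul_comm, smul_sub]
    abel
  rw [e1, e2, hwp, hwq, hyp, hyq, smul_sub, smul_neg, smul_neg, smul_sub]
  abel

end Abstract

lemma eP_sq (m j : ℕ) : eP m j * eP m j = 0 := by
  rw [eP, CliffordAlgebra.ι_sq_scalar]
  simp [splitQ, LinearMap.BilinMap.toQuadraticMap_apply, splitBilin]
  exact RingHom.map_zero _

lemma eM_sq (m j : ℕ) : eM m j * eM m j = 0 := by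
  rw [eM, CliffordAlgebra.ι_sq_scalar]
  simp [splitQ, LinearMap.BilinMap.toQuadraticMap_apply, splitBilin]
  exact RingHom.map_zero _

lemma splitBilin_apply (m : ℕ) (v w : (Fin m → ℂ) × (Fin m → ℂ)) :
    splitBilin m v w = ∑ j, v.1 j * w.2 j := rfl

lemma eP_mul_eP (m j k : ℕ) : eP m j * eP m k = -(eP m k * eP m j) := by
  have h := CliffordAlgebra.ι_mul_ι_add_swap (Q := splitQ m)
    ((fun i => if (i : ℕ) + 1 = j then (1:ℂ) else 0), 0)
    ((fun i => if (i : ℕ) + 1 = k then (1:ℂ) else 0), 0)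
  rw [show splitQ m = LinearMap.BilinMap.toQuadraticMap (splitBilin m) from rfl,
    LinearMap.BilinMap.polar_toQuadraticMap] at h
  simp only [splitBilin_apply, Pi.zero_apply, mul_zero, zero_mul, Finset.sum_const_zero,
    add_zero, map_zero] at h
  rw [eP, eP]
  exact eq_neg_of_add_eq_zero_left h

lemma eM_mul_eM (m j k : ℕ) : eM m j * eM m k = -(eM m k * eM m j) := by
  have h := CliffordAlgebra.ι_mul_ι_add_swap (Q := splitQ m)
    (0, (fun i => if (i : ℕ) + 1 = j then (1:ℂ) else 0))
    (0, (fun i => if (i : ℕ) + 1 = k then (1:ℂ) else 0))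
  rw [show splitQ m = LinearMap.BilinMap.toQuadraticMap (splitBilin m) from rfl,
    LinearMap.BilinMap.polar_toQuadraticMap] at h
  simp only [splitBilin_apply, Pi.zero_apply, mul_zero, zero_mul, Finset.sum_const_zero,
    add_zero, map_zero] at h
  rw [eM, eM]
  exact eq_neg_of_add_eq_zero_left h

lemma eP_mul_eM_add (m j k : ℕ) : eP m j * eM m k + eM m k * eP m j
    = algebraMap ℂ _ (∑ i : Fin m, (if (i:ℕ)+1 = j then (1:ℂ) else 0) * (if (i:ℕ)+1 = k then (1:ℂ) else 0)) := by
  have h := CliffordAlgebra.ι_mul_ι_add_swap (Q := splitQ m)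
    ((fun i => if (i : ℕ) + 1 = j then (1:ℂ) else 0), 0)
    (0, (fun i => if (i : ℕ) + 1 = k then (1:ℂ) else 0))
  rw [show splitQ m = LinearMap.BilinMap.toQuadraticMap (splitBilin m) from rfl,
    LinearMap.BilinMap.polar_toQuadraticMap] at h
  simp only [splitBilin_apply, Pi.zero_apply, mul_zero, zero_mul, Finset.sum_const_zero,
    add_zero] at h
  rw [eP, eM]
  exact h

lemma eP_mul_eM_self (m j : ℕ) (h1 : 1 ≤ j) (hm : j ≤ m) :
    eP m j * eM m j + eM m j * eP m j = 1 := by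
  rw [eP_mul_eM_add]
  have : (∑ i : Fin m, (if (i:ℕ)+1 = j then (1:ℂ) else 0) * (if (i:ℕ)+1 = j then (1:ℂ) else 0)) = 1 := by
    rw [Finset.sum_eq_single (⟨j - 1, by omega⟩ : Fin m)]
    · have : ((⟨j - 1, by omega⟩ : Fin m) : ℕ) + 1 = j := by simp; omega
      simp [this]
    · intro b _ hb
      have : (b:ℕ) + 1 ≠ j := by
        intro hc; apply hb; ext; simp; omega
      simp [this]
    · intro hx; exact absurd (Finset.mem_univ _) hx
  rw [this, map_one]

lemma eP_mul_eM_ne (m j k : ℕ) (h : j ≠ k) : eP m j * eM m k = -(eM m k * eP m j) := by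
  have h2 := eP_mul_eM_add m j k
  have : (∑ i : Fin m, (if (i:ℕ)+1 = j then (1:ℂ) else 0) * (if (i:ℕ)+1 = k then (1:ℂ) else 0)) = 0 := by
    apply Finset.sum_eq_zero
    intro i _
    by_cases hj : (i:ℕ)+1 = j
    · have : (i:ℕ)+1 ≠ k := by omega
      simp [this]
    · simp [hj]
  rw [this, map_zero] at h2
  exact eq_neg_of_add_eq_zero_left h2


lemma idemF_mul_eperp_odd (m s : ℕ) (h1 : 1 ≤ s) (hm : s ≤ m) (hodd : s % 2 = 1)
    (nrm sg : Bool) :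
    idemF m s nrm sg * eperp m s
      = ((-1 : ℂ) ^ (bval sg + 1) * Complex.I) • idemF m s nrm sg := by
  have hI : oddI s = Complex.I := by rw [oddI, if_pos hodd]
  have hp := eP_sq m s
  have hq := eM_sq m s
  have hpq : eP m s * eM m s = 1 - eM m s * eP m s :=
    eq_sub_of_add_eq (eP_mul_eM_self m s h1 hm)
  have hqp : eM m s * eP m s = 1 - eP m s * eM m s :=
    eq_sub_of_add_eq (by rw [add_comm]; exact eP_mul_eM_self m s h1 hm)
  cases nrm <;> cases sg
  · show idemLp m s * eperp m s = _ • idemLp m s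
    rw [idemLp, eperp, hI, Lc _ _ _ hp hq hqp]
    match_scalars <;> ring_nf <;> simp [Complex.I_sq, bval]
  · show idemLm m s * eperp m s = _ • idemLm m s
    rw [idemLm, eperp, hI, sub_eq_add_neg, ← neg_smul, Lc _ _ _ hp hq hqp]
    match_scalars <;> ring_nf <;> simp [Complex.I_sq, bval]
  · show idemMm m s * eperp m s = _ • idemMm m s
    rw [idemMm, eperp, hI, sub_eq_add_neg, ← neg_smul, Mc _ _ _ hp hq hpq]
    match_scalars <;> ring_nf <;> simp [Complex.I_sq, bval]
  · show idemMp m s * eperp m s = _ • idemMp m s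
    rw [idemMp, eperp, hI, Mc _ _ _ hp hq hpq]
    match_scalars <;> ring_nf <;> simp [Complex.I_sq, bval]

lemma idemF_mul_eperp_even (m s : ℕ) (h1 : 1 ≤ s) (hm : s ≤ m) (heven : s % 2 = 0)
    (nrm sg : Bool) :
    idemF m s nrm (!sg) * eperp m s = ((-1 : ℂ) ^ (bval sg)) • idemF m s nrm sg := by
  have hI : oddI s = 1 := by rw [oddI, if_neg (by omega)]
  have hp := eP_sq m s
  have hq := eM_sq m s
  have hpq : eP m s * eM m s = 1 - eM m s * eP m s :=
    eq_sub_of_add_eq (eP_mul_eM_self m s h1 hm)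
  have hqp : eM m s * eP m s = 1 - eP m s * eM m s :=
    eq_sub_of_add_eq (by rw [add_comm]; exact eP_mul_eM_self m s h1 hm)
  cases nrm <;> cases sg
  · show idemLm m s * eperp m s = _ • idemLp m s
    rw [idemLm, idemLp, eperp, hI, sub_eq_add_neg, ← neg_smul, Lc _ _ _ hp hq hqp]
    match_scalars <;> ring_nf <;> simp [bval]
  · show idemLp m s * eperp m s = _ • idemLm m s
    rw [idemLp, idemLm, eperp, hI, Lc _ _ _ hp hq hqp]
    match_scalars <;> ring_nf <;> simp [bval]
  · show idemMp m s * eperp m s = _ • idemMm m s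
    rw [idemMp, idemMm, eperp, hI, Mc _ _ _ hp hq hpq]
    match_scalars <;> ring_nf <;> simp [bval]
  · show idemMm m s * eperp m s = _ • idemMp m s
    rw [idemMm, idemMp, eperp, hI, sub_eq_add_neg, ← neg_smul, Mc _ _ _ hp hq hpq]
    match_scalars <;> ring_nf <;> simp [bval]

lemma idemF_swap (m s t : ℕ) (hst : s ≠ t) (nrm sg : Bool) :
    idemF m s nrm sg * eperp m t = eperp m t * idemF m s nrm (!sg) := by
  have hPsPt : eP m s * eP m t = -(eP m t * eP m s) := eP_mul_eP m s t
  have hMsMt : eM m s * eM m t = -(eM m t * eM m s) := eM_mul_eM m s t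
  have hPsMt : eP m s * eM m t = -(eM m t * eP m s) := eP_mul_eM_ne m s t hst
  have hMsPt : eM m s * eP m t = -(eP m t * eM m s) := by
    rw [eP_mul_eM_ne m t s (Ne.symm hst), neg_neg]
  have hwp : (eP m s * eM m s) * eP m t = eP m t * (eP m s * eM m s) :=
    comm2 _ _ _ hPsPt hMsPt
  have hwq : (eP m s * eM m s) * eM m t = eM m t * (eP m s * eM m s) :=
    comm2 _ _ _ hPsMt hMsMt
  have hwp' : (eM m s * eP m s) * eP m t = eP m t * (eM m s * eP m s) :=
    comm2 _ _ _ hMsPt hPsPt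
  have hwq' : (eM m s * eP m s) * eM m t = eM m t * (eM m s * eP m s) :=
    comm2 _ _ _ hMsMt hPsMt
  cases nrm <;> cases sg
  · show idemLp m s * eperp m t = eperp m t * idemLm m s
    rw [idemLp, idemLm, eperp, swapLem _ _ _ _ _ hwp hwq hPsPt hPsMt]
  · show idemLm m s * eperp m t = eperp m t * idemLp m s
    rw [idemLm, idemLp, eperp, sub_eq_add_neg, ← neg_smul,
      swapLem _ _ _ _ _ hwp hwq hPsPt hPsMt, neg_smul, sub_neg_eq_add]
  · show idemMm m s * eperp m t = eperp m t * idemMp m s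
    rw [idemMm, idemMp, eperp, sub_eq_add_neg, ← neg_smul,
      swapLem _ _ _ _ _ hwp' hwq' hMsPt hMsMt, neg_smul, sub_neg_eq_add]
  · show idemMp m s * eperp m t = eperp m t * idemMm m s
    rw [idemMp, idemMm, eperp, swapLem _ _ _ _ _ hwp' hwq' hMsPt hMsMt]

/-- `F_{2a-1} F_{2a} e_{2a-1}^⊥ e_{2a}^⊥
= (-1)^{|F_{2a-1}|+|F_{2a}|+1} i F_{2a-1} F_{2a}`. -/
theorem pair_right_mul_eperp (m : ℕ) (a : ℕ) (ha : 1 ≤ a) (ham : 2 * a ≤ m)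
    (nrm₁ sg₁ nrm₂ sg₂ : Bool) :
    idemF m (2 * a - 1) nrm₁ sg₁ * idemF m (2 * a) nrm₂ sg₂ *
        eperp m (2 * a - 1) * eperp m (2 * a) =
      ((-1 : ℂ) ^ (bval sg₁ + bval sg₂ + 1) * Complex.I) •
        (idemF m (2 * a - 1) nrm₁ sg₁ * idemF m (2 * a) nrm₂ sg₂) := by
  have hswap := idemF_swap m (2*a) (2*a-1) (by omega) nrm₂ sg₂
  have hodd := idemF_mul_eperp_odd m (2*a-1) (by omega) (by omega) (by omega) nrm₁ sg₁
  have heven := idemF_mul_eperp_even m (2*a) (by omega) ham (by omega) nrm₂ sg₂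
  calc idemF m (2 * a - 1) nrm₁ sg₁ * idemF m (2 * a) nrm₂ sg₂ *
          eperp m (2 * a - 1) * eperp m (2 * a)
      = idemF m (2 * a - 1) nrm₁ sg₁ * (idemF m (2 * a) nrm₂ sg₂ * eperp m (2 * a - 1)) *
          eperp m (2 * a) := by
        rw [mul_assoc (idemF m (2 * a - 1) nrm₁ sg₁)]
    _ = (idemF m (2 * a - 1) nrm₁ sg₁ * eperp m (2 * a - 1)) *
          (idemF m (2 * a) nrm₂ (!sg₂) * eperp m (2 * a)) := by
        rw [hswap, ← mul_assoc, mul_assoc]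
    _ = (((-1 : ℂ) ^ (bval sg₁ + 1) * Complex.I) • idemF m (2 * a - 1) nrm₁ sg₁) *
          (((-1 : ℂ) ^ (bval sg₂)) • idemF m (2 * a) nrm₂ sg₂) := by
        rw [hodd, heven]
    _ = ((((-1 : ℂ) ^ (bval sg₁ + 1) * Complex.I)) * ((-1 : ℂ) ^ (bval sg₂))) •
          (idemF m (2 * a - 1) nrm₁ sg₁ * idemF m (2 * a) nrm₂ sg₂) := by
        rw [smul_mul_assoc, mul_smul_comm, smul_smul]
    _ = ((-1 : ℂ) ^ (bval sg₁ + bval sg₂ + 1) * Complex.I) •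
          (idemF m (2 * a - 1) nrm₁ sg₁ * idemF m (2 * a) nrm₂ sg₂) := by
        congr 1
        cases sg₁ <;> cases sg₂ <;> simp [bval] <;> ring


end
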